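/- Let p be a prime, n, m ≥ 1, and S = GR(p^n,m) = (ZMod (p^n))[X]/(f) for a monic basic irreducible f of degree m. Let C ⊆ S^N be a free MDS code of rank k with 0 < k < N, i.e. C is a free S-submodule of rank k whose minimum Hamming distance equals N − k + 1. Then the dual code C^⊥ = {x ∈ S^N : Σ_i x_i c_i = 0 for all c ∈ C} is a free S-module of rank N − k whose minimum Hamming distance equals k + 1; that is, C^⊥ is a free MDS code of rank N − k. -/

import Mathlib

/-- The dual code of a linear code `C ⊆ A^N` with respect to the standard Euclidean inner
product. -/
def dualCode (A : Type*) [CommRing A] {N : ℕ} (C : Submodule A (Fin N → A)) :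
    Submodule A (Fin N → A) where
  carrier := {x | ∀ c ∈ C, ∑ i, x i * c i = 0}
  add_mem' := by
    intro a b ha hb c hc
    simp only [Set.mem_setOf_eq] at *
    simp [add_mul, Finset.sum_add_distrib, ha c hc, hb c hc]
  zero_mem' := by intro c hc; simp
  smul_mem' := by
    intro r x hx c hc
    simp only [Set.mem_setOf_eq, Pi.smul_apply, smul_eq_mul, mul_assoc, ← Finset.mul_sum]
    simp [hx c hc]

section Aux

set_option linter.unusedSectionVars false

variable {R : Type*} [CommRing R] [Finite R] {N k : ℕ}

private lemma ncard_range_eq {ι : Fin k → Fin N} (hι : Function.Injective ι) :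
    Set.ncard (Set.range ι) = k := by
  rw [← Set.image_univ, Set.ncard_image_of_injective _ hι, Set.ncard_univ]
  simp

private lemma mem_eq_zero_of_proj_zero (C : Submodule R (Fin N → R))
    (hdist : ∀ c ∈ C, c ≠ 0 → N - k + 1 ≤ Set.ncard {i | c i ≠ 0}) (hkN : k ≤ N)
    {ι : Fin k → Fin N} (hι : Function.Injective ι) :
    ∀ c ∈ C, (∀ j, c (ι j) = 0) → c = 0 := by
  intro c hc hzero
  by_contra hne
  have h1 := hdist c hc hne
  have hsub : {i | c i ≠ 0} ⊆ (Set.range ι)ᶜ := by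
    rintro i hi ⟨j, rfl⟩
    exact hi (hzero j)
  have h2 : Set.ncard {i | c i ≠ 0} ≤ N - k := by
    have h3 : Set.ncard {i | c i ≠ 0} ≤ Set.ncard (Set.range ι)ᶜ :=
      Set.ncard_le_ncard hsub (Set.toFinite _)
    have h4 : Set.ncard (Set.range ι) + Set.ncard (Set.range ι)ᶜ = N := by
      rw [Set.ncard_add_ncard_compl]
      simp [Nat.card_eq_fintype_card]
    rw [ncard_range_eq hι] at h4
    omega
  omega

private lemma proj_bijective (C : Submodule R (Fin N → R)) (b : Module.Basis (Fin k) R C)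
    (hdist : ∀ c ∈ C, c ≠ 0 → N - k + 1 ≤ Set.ncard {i | c i ≠ 0}) (hkN : k ≤ N)
    {ι : Fin k → Fin N} (hι : Function.Injective ι) :
    Function.Bijective ((LinearMap.funLeft R R ι).comp C.subtype) := by
  rw [Nat.bijective_iff_injective_and_card]
  constructor
  · intro a c hab
    have hz : ∀ j, ((a - c : C) : Fin N → R) (ι j) = 0 := by
      intro j
      have := congrFun hab j
      simp only [LinearMap.comp_apply, LinearMap.funLeft_apply, Submodule.coe_subtype] at this
      simp [this]
    have h0 := mem_eq_zero_of_proj_zero C hdist hkN hι _ (a - c : C).2 hz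
    have h1 : (a - c : C) = 0 := Subtype.ext h0
    rwa [sub_eq_zero] at h1
  · exact Nat.card_congr b.equivFun.toEquiv

theorem dual_aux [Nontrivial R] (hk0 : 0 < k) (hkN : k < N)
    (C : Submodule R (Fin N → R)) (b : Module.Basis (Fin k) R C)
    (hdist : ∀ c ∈ C, c ≠ 0 → N - k + 1 ≤ Set.ncard {i | c i ≠ 0}) :
    Nonempty (Module.Basis (Fin (N - k)) R (dualCode R C)) ∧
    (∀ x ∈ dualCode R C, x ≠ 0 → k + 1 ≤ Set.ncard {i | x i ≠ 0}) ∧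
    (∃ x ∈ dualCode R C, x ≠ 0 ∧ Set.ncard {i | x i ≠ 0} = k + 1) := by
  classical
  -- split the coordinates
  let e : Fin (k + (N - k)) ≃ Fin N := finCongr (by omega)
  let σ : Fin k → Fin N := fun j => e (Fin.castAdd (N - k) j)
  let τ : Fin (N - k) → Fin N := fun j => e (Fin.natAdd k j)
  have hσinj : Function.Injective σ := by
    intro a c h
    have := congrArg Fin.val h
    simp [σ, e] at this
    exact Fin.val_injective this
  have hτinj : Function.Injective τ := by
    intro a c h
    have := congrArg Fin.val h
    simp [τ, e] at this
    exact Fin.val_injective this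
  have hsplit : ∀ F : Fin N → R, ∑ i, F i = ∑ j, F (σ j) + ∑ j, F (τ j) := by
    intro F
    rw [← Equiv.sum_comp e F, Fin.sum_univ_add]
  have hcases : ∀ i : Fin N, (∃ j, i = σ j) ∨ (∃ j, i = τ j) := by
    intro i
    obtain ⟨i', rfl⟩ : ∃ i', e i' = i := ⟨e.symm i, e.apply_symm_apply i⟩
    exact Fin.addCases (fun j => Or.inl ⟨j, rfl⟩) (fun j => Or.inr ⟨j, rfl⟩) i'
  -- systematic form
  let π : C →ₗ[R] (Fin k → R) := (LinearMap.funLeft R R σ).comp C.subtype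
  have hπbij := proj_bijective C b hdist hkN.le hσinj
  let Φ : C ≃ₗ[R] (Fin k → R) := LinearEquiv.ofBijective π hπbij
  have hΦapp : ∀ (c : C) (l : Fin k), Φ c l = (c : Fin N → R) (σ l) := fun _ _ => rfl
  let cw : Fin k → C := fun j => Φ.symm (Pi.single j 1)
  have hcw : ∀ j l, (cw j : Fin N → R) (σ l) = (Pi.single j 1 : Fin k → R) l := by
    intro j l
    have h := Φ.apply_symm_apply (Pi.single j (1 : R))
    have := congrFun h l
    rwa [hΦapp] at this
  have hrepr : ∀ c : C, (c : Fin N → R) = ∑ l, (c : Fin N → R) (σ l) • (cw l : Fin N → R) := by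
    intro c
    have h1 : (c : C) = ∑ l, ((c : Fin N → R) (σ l)) • cw l := by
      apply Φ.injective
      rw [map_sum]
      simp only [map_smul, cw, Φ.apply_symm_apply]
      funext j
      rw [hΦapp]
      simp [Pi.single_apply]
    calc (c : Fin N → R) = ((∑ l, ((c : Fin N → R) (σ l)) • cw l : C) : Fin N → R) := by
          rw [← h1]
      _ = ∑ l, (c : Fin N → R) (σ l) • (cw l : Fin N → R) := by
          push_cast [Submodule.coe_sum]
          rfl
  have hreprτ : ∀ c : C, ∀ j', (c : Fin N → R) (τ j') =
      ∑ l, (c : Fin N → R) (σ l) * (cw l : Fin N → R) (τ j') := by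
    intro c j'
    conv_lhs => rw [hrepr c]
    simp [Finset.sum_apply]
  have hreprτ' : ∀ c ∈ C, ∀ j' : Fin (N - k), c (τ j') =
      ∑ l, c (σ l) * (cw l : Fin N → R) (τ j') := fun c hc j' => hreprτ ⟨c, hc⟩ j'
  -- the dual vectors
  let x0 : (Fin (N - k) → R) → (Fin N → R) := fun v i =>
    Fin.addCases (fun j => -∑ j', (cw j : Fin N → R) (τ j') * v j') (fun j' => v j') (e.symm i)
  have hx0σ : ∀ v j, x0 v (σ j) = -∑ j', (cw j : Fin N → R) (τ j') * v j' := by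
    intro v j
    have h : e.symm (σ j) = Fin.castAdd (N - k) j := e.symm_apply_apply _
    simp only [x0, h, Fin.addCases_left]
  have hx0τ : ∀ v j', x0 v (τ j') = v j' := by
    intro v j'
    have h : e.symm (τ j') = Fin.natAdd k j' := e.symm_apply_apply _
    simp only [x0, h, Fin.addCases_right]
  have hx0mem : ∀ v, x0 v ∈ dualCode R C := by
    intro v c hc
    rw [hsplit]
    have e1 : ∑ j, x0 v (σ j) * c (σ j)
        = -∑ j, ∑ j', (cw j : Fin N → R) (τ j') * v j' * c (σ j) := by
      simp only [hx0σ, neg_mul, Finset.sum_mul, Finset.sum_neg_distrib]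
    have e2 : ∑ j', x0 v (τ j') * c (τ j')
        = ∑ j, ∑ j', (cw j : Fin N → R) (τ j') * v j' * c (σ j) := by
      simp only [hx0τ]
      calc ∑ j', v j' * c (τ j')
          = ∑ j', v j' * ∑ l, c (σ l) * (cw l : Fin N → R) (τ j') := by
            refine Finset.sum_congr rfl fun j' _ => ?_
            rw [hreprτ' c hc j']
        _ = ∑ j', ∑ l, v j' * (c (σ l) * (cw l : Fin N → R) (τ j')) := by
            simp [Finset.mul_sum]
        _ = ∑ l, ∑ j', v j' * (c (σ l) * (cw l : Fin N → R) (τ j')) := Finset.sum_comm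
        _ = ∑ j, ∑ j', (cw j : Fin N → R) (τ j') * v j' * c (σ j) := by
            refine Finset.sum_congr rfl fun j _ => Finset.sum_congr rfl fun j' _ => by ring
    rw [e1, e2, neg_add_cancel]
  -- the projection of the dual code
  let Ψ : (dualCode R C) →ₗ[R] (Fin (N - k) → R) :=
    (LinearMap.funLeft R R τ).comp (dualCode R C).subtype
  have hker : ∀ x : dualCode R C, (∀ j', (x : Fin N → R) (τ j') = 0) → x = 0 := by
    intro x hx0
    have hσ0 : ∀ j, (x : Fin N → R) (σ j) = 0 := by
      intro j
      have h0 : ∑ i, (x : Fin N → R) i * (cw j : Fin N → R) i = 0 := x.2 _ (cw j).2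
      rw [hsplit] at h0
      have hs : ∑ l, (x : Fin N → R) (σ l) * (cw j : Fin N → R) (σ l)
          = (x : Fin N → R) (σ j) := by
        simp only [hcw]
        simp [Pi.single_apply]
      have ht : ∑ j', (x : Fin N → R) (τ j') * (cw j : Fin N → R) (τ j') = 0 := by
        refine Finset.sum_eq_zero fun j' _ => ?_
        rw [hx0 j', zero_mul]
      rw [hs, ht, add_zero] at h0
      exact h0
    apply Subtype.ext
    funext i
    rcases hcases i with ⟨j, rfl⟩ | ⟨j', rfl⟩
    · exact hσ0 j
    · exact hx0 j'
  have hΨinj : Function.Injective Ψ := by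
    intro a c hac
    have hz : ∀ j', ((a - c : dualCode R C) : Fin N → R) (τ j') = 0 := by
      intro j'
      have := congrFun hac j'
      simp only [Ψ, LinearMap.comp_apply, LinearMap.funLeft_apply, Submodule.coe_subtype] at this
      simp [this]
    have h1 := hker _ hz
    rwa [sub_eq_zero] at h1
  have hΨsurj : Function.Surjective Ψ := by
    intro v
    exact ⟨⟨x0 v, hx0mem v⟩, funext fun j' => hx0τ v j'⟩
  let Ψe : (dualCode R C) ≃ₗ[R] (Fin (N - k) → R) := LinearEquiv.ofBijective Ψ ⟨hΨinj, hΨsurj⟩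
  -- lower bound on the weights of the dual code
  have hlb : ∀ x ∈ dualCode R C, x ≠ 0 → k + 1 ≤ Set.ncard {i | x i ≠ 0} := by
    intro x hx hne
    by_contra hcon
    push_neg at hcon
    have hcard : {i | x i ≠ 0}.toFinset.card ≤ k := by
      rw [← Set.ncard_eq_toFinset_card']
      omega
    obtain ⟨t, hst, htcard⟩ := Finset.exists_superset_card_eq hcard (by simp; omega)
    let ι : Fin k → Fin N := fun j => ((t.orderIsoOfFin htcard) j : Fin N)
    have hιinj : Function.Injective ι := fun a c h =>
      (t.orderIsoOfFin htcard).injective (Subtype.ext h)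
    have hbij := proj_bijective C b hdist hkN.le hιinj
    have hx_out : ∀ i, i ∉ t → x i = 0 := by
      intro i hi
      by_contra h
      exact hi (hst (by simpa using h))
    have hzeroι : ∀ j0 : Fin k, x (ι j0) = 0 := by
      intro j0
      obtain ⟨c, hc⟩ := hbij.2 (Pi.single j0 1)
      have hcproj : ∀ l, (c : Fin N → R) (ι l) = (Pi.single j0 1 : Fin k → R) l :=
        fun l => congrFun hc l
      have h0 := hx (c : Fin N → R) c.2
      rw [← Finset.sum_add_sum_compl t] at h0
      have h1 : ∑ i ∈ tᶜ, x i * (c : Fin N → R) i = 0 :=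
        Finset.sum_eq_zero fun i hi => by
          rw [hx_out i (by simpa using hi), zero_mul]
      have h2 : ∑ i ∈ t, x i * (c : Fin N → R) i
          = ∑ j, x (ι j) * (c : Fin N → R) (ι j) := by
        rw [← Finset.sum_coe_sort t (fun i => x i * (c : Fin N → R) i)]
        exact (Equiv.sum_comp (t.orderIsoOfFin htcard).toEquiv
          (fun i : t => x (i : Fin N) * (c : Fin N → R) (i : Fin N))).symm
      rw [h1, add_zero, h2] at h0
      have h3 : ∑ j, x (ι j) * (c : Fin N → R) (ι j) = x (ι j0) := by
        simp only [hcproj]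
        simp [Pi.single_apply]
      rw [h3] at h0
      exact h0
    apply hne
    funext i
    by_cases hi : i ∈ t
    · have h4 : ι ((t.orderIsoOfFin htcard).symm ⟨i, hi⟩) = i :=
        congrArg Subtype.val ((t.orderIsoOfFin htcard).apply_symm_apply ⟨i, hi⟩)
      rw [← h4]
      exact hzeroι _
    · exact hx_out i hi
  refine ⟨⟨(Pi.basisFun R (Fin (N - k))).map Ψe.symm⟩, hlb, ?_⟩
  -- a dual word of weight exactly k + 1
  have hNk : 0 < N - k := by omega
  let j0 : Fin (N - k) := ⟨0, hNk⟩
  let v : Fin (N - k) → R := Pi.single j0 1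
  have hvne : x0 v ≠ 0 := by
    intro h
    have := congrFun h (τ j0)
    rw [hx0τ] at this
    simp [v] at this
  refine ⟨x0 v, hx0mem v, hvne, ?_⟩
  have hsub : {i | x0 v i ≠ 0} ⊆ Set.range σ ∪ {τ j0} := by
    intro i hi
    rcases hcases i with ⟨j, rfl⟩ | ⟨j', rfl⟩
    · exact Or.inl ⟨j, rfl⟩
    · right
      have h5 : v j' ≠ 0 := by
        have : x0 v (τ j') ≠ 0 := hi
        rwa [hx0τ] at this
      have h6 : j' = j0 := by
        by_contra hj
        exact h5 (Pi.single_eq_of_ne hj 1)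
      simp [h6]
  have hle : Set.ncard {i | x0 v i ≠ 0} ≤ k + 1 := by
    refine le_trans (Set.ncard_le_ncard hsub (Set.toFinite _)) ?_
    refine le_trans (Set.ncard_union_le _ _) ?_
    rw [ncard_range_eq hσinj]
    simp
  have hge := hlb (x0 v) (hx0mem v) hvne
  omega

end Aux

theorem dual_of_free_MDS_is_free_MDS (p n m : ℕ) (hp : p.Prime) (hn : 0 < n) (hm : 0 < m)
    (f : Polynomial (ZMod (p ^ n))) (hf : f.Monic) (hdeg : f.natDegree = m)
    (hirr : Irreducible (f.map (ZMod.castHom (dvd_pow_self p hn.ne') (ZMod p))))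
    (N k : ℕ) (hk0 : 0 < k) (hkN : k < N)
    (C : Submodule (AdjoinRoot f) (Fin N → AdjoinRoot f))
    (b : Module.Basis (Fin k) (AdjoinRoot f) C)
    (hdist_lb : ∀ c ∈ C, c ≠ 0 → N - k + 1 ≤ Set.ncard {i | c i ≠ 0})
    (hdist_eq : ∃ c ∈ C, c ≠ 0 ∧ Set.ncard {i | c i ≠ 0} = N - k + 1) :
    Nonempty (Module.Basis (Fin (N - k)) (AdjoinRoot f) (dualCode (AdjoinRoot f) C)) ∧
    (∀ x ∈ dualCode (AdjoinRoot f) C, x ≠ 0 → k + 1 ≤ Set.ncard {i | x i ≠ 0}) ∧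
    (∃ x ∈ dualCode (AdjoinRoot f) C, x ≠ 0 ∧ Set.ncard {i | x i ≠ 0} = k + 1) := by
  haveI : NeZero (p ^ n) := ⟨(pow_pos hp.pos n).ne'⟩
  haveI : Fact (1 < p ^ n) := ⟨Nat.one_lt_pow hn.ne' hp.one_lt⟩
  let pb := AdjoinRoot.powerBasis' hf
  haveI : Finite (AdjoinRoot f) := Finite.of_equiv _ pb.basis.equivFun.toEquiv.symm
  haveI : Nonempty (Fin pb.dim) := by
    refine ⟨⟨0, ?_⟩⟩
    show 0 < f.natDegree
    omega
  haveI : Nontrivial (AdjoinRoot f) := pb.basis.equivFun.toEquiv.nontrivial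
  exact dual_aux hk0 hkN C b hdist_lb
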